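/- Let k ≥ 3 be an integer, let μ_k be the set of k-th roots of unity in ℂ, and let ζ = exp(2πi/k). If a_1, ..., a_n ∈ μ_k ∪ {0} satisfy a_1 + ... + a_n = n - 1 + ζ, then there exists exactly one index j with a_j = ζ, and a_i = 1 for all i ≠ j. -/

import Mathlib

open Finset

/-- Auxiliary strict bound: if `a` is `0` or a `k`-th root of unity, other than `1` and
`ζ = exp(iθ)` with `θ = 2π/k`, then `(1+cos θ)·re a + sin θ·im a < 1 + cos θ`. -/
lemma aux_lt (k : ℕ) (hk : 3 ≤ k) (a : ℂ) (ha : a = 0 ∨ a ^ k = 1)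
    (h1 : a ≠ 1) (hz : a ≠ Complex.exp (((2 * Real.pi / k : ℝ) : ℂ) * Complex.I)) :
    (1 + Real.cos (2 * Real.pi / k)) * a.re + Real.sin (2 * Real.pi / k) * a.im
      < 1 + Real.cos (2 * Real.pi / k) := by
  have hkpos : (0:ℝ) < k := by positivity
  set θ : ℝ := 2 * Real.pi / k with hθ
  have hπ := Real.pi_pos
  have hθpos : 0 < θ := by positivity
  have hk3 : (3:ℝ) ≤ (k:ℝ) := by exact_mod_cast hk
  have hθle : θ ≤ 2 * Real.pi / 3 := by
    rw [hθ, div_le_div_iff₀ hkpos (by norm_num)]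
    nlinarith [Real.pi_pos]
  have hθltπ : θ < Real.pi := by
    have : 2 * Real.pi / 3 < Real.pi := by linarith
    linarith
  have hcosθ : -1 < Real.cos θ := by
    have := Real.cos_lt_cos_of_nonneg_of_le_pi hθpos.le le_rfl hθltπ
    rwa [Real.cos_pi] at this
  rcases ha with rfl | ha
  · simpa using by linarith
  · -- a = ζ ^ j
    have : NeZero k := ⟨by omega⟩
    obtain ⟨j, hjk, hja⟩ := (Complex.isPrimitiveRoot_exp k (by omega)).eq_pow_of_pow_eq_one ha
    have hexp : Complex.exp (2 * Real.pi * Complex.I / k) =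
        Complex.exp (((θ : ℝ) : ℂ) * Complex.I) := by
      congr 1; push_cast [hθ]; ring
    have haeq : a = Complex.exp (((j * θ : ℝ) : ℂ) * Complex.I) := by
      rw [← hja, hexp, ← Complex.exp_nat_mul]; congr 1; push_cast; ring
    have hre : a.re = Real.cos (j * θ) := by rw [haeq, Complex.exp_ofReal_mul_I_re]
    have him : a.im = Real.sin (j * θ) := by rw [haeq, Complex.exp_ofReal_mul_I_im]
    have hj0 : j ≠ 0 := by
      rintro rfl; exact h1 (by simpa using haeq)
    have hj1 : j ≠ 1 := by
      rintro rfl; exact hz (by simpa using haeq)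
    have hj2 : 2 ≤ j := by omega
    have hjk1 : j ≤ k - 1 := by omega
    rw [hre, him]
    -- LHS = cos(jθ) + cos((j-1)θ) = 2 cos((2j-1)θ/2) cos(θ/2)
    have key : Real.cos ((2 * j - 1) * θ / 2) < Real.cos (θ / 2) := by
      set x : ℝ := (2 * j - 1) * θ / 2 with hx
      have hxlb : θ / 2 < x := by
        rw [hx]
        have : (3:ℝ) ≤ 2 * j - 1 := by
          have : (2:ℝ) ≤ j := by exact_mod_cast hj2
          linarith
        nlinarith
      have hxub : x ≤ 2 * Real.pi - 3 * (θ / 2) := by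
        rw [hx]
        have hjR : (j : ℝ) ≤ k - 1 := by
          have : (j:ℝ) + 1 ≤ k := by exact_mod_cast (by omega : j + 1 ≤ k)
          linarith
        have hkθ : (k : ℝ) * θ = 2 * Real.pi := by
          rw [hθ]; field_simp
        nlinarith
      rcases le_or_gt x Real.pi with hxπ | hxπ
      · exact Real.cos_lt_cos_of_nonneg_of_le_pi (by positivity) hxπ hxlb
      · have h2 : Real.cos x = Real.cos (2 * Real.pi - x) := (Real.cos_two_pi_sub x).symm
        rw [h2]
        refine Real.cos_lt_cos_of_nonneg_of_le_pi (by positivity) ?_ ?_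
        · linarith
        · linarith
    have hcoshalf : 0 < Real.cos (θ / 2) := by
      apply Real.cos_pos_of_mem_Ioo
      constructor <;> [linarith; linarith]
    have expand : (1 + Real.cos θ) * Real.cos (j * θ) + Real.sin θ * Real.sin (j * θ)
        = Real.cos (j * θ) + Real.cos (j * θ - θ) := by
      rw [Real.cos_sub]; ring
    have sum2prod : Real.cos (j * θ) + Real.cos (j * θ - θ)
        = 2 * Real.cos ((2 * j - 1) * θ / 2) * Real.cos (θ / 2) := by
      rw [Real.cos_add_cos]; ring_nf
    have half : 1 + Real.cos θ = 2 * Real.cos (θ / 2) ^ 2 := by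
      have h := Real.cos_sq (θ / 2)
      have h2 : 2 * (θ / 2) = θ := by ring
      rw [h2] at h
      linarith
    rw [expand, sum2prod, half]
    nlinarith [key, hcoshalf]

/-- Let `k ≥ 3`, and `ζ = exp(2πi/k)`. If `a 1, …, a n` are each `0` or
a `k`-th root of unity and their sum is `n - 1 + ζ`, then there is exactly one index `j`
with `a j = ζ`, and `a i = 1` for all `i ≠ j`. -/
theorem stmt0 (k n : ℕ) (hk : 3 ≤ k) (a : Fin n → ℂ)
    (ha : ∀ i, a i = 0 ∨ a i ^ k = 1)
    (hsum : ∑ i, a i = (n : ℂ) - 1 + Complex.exp (2 * Real.pi * Complex.I / k)) :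
    ∃! j, a j = Complex.exp (2 * Real.pi * Complex.I / k) ∧
      ∀ i, i ≠ j → a i = 1 := by
  have hkpos : (0:ℝ) < k := by positivity
  set θ : ℝ := 2 * Real.pi / k with hθ
  have hexp : Complex.exp (2 * Real.pi * Complex.I / k) =
      Complex.exp (((θ : ℝ) : ℂ) * Complex.I) := by
    congr 1; push_cast [hθ]; ring
  set ζ : ℂ := Complex.exp (((θ : ℝ) : ℂ) * Complex.I) with hζ
  have hζre : ζ.re = Real.cos θ := Complex.exp_ofReal_mul_I_re θ
  have hζim : ζ.im = Real.sin θ := Complex.exp_ofReal_mul_I_im θ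
  have hζ1 : ζ ≠ 1 := by
    have hprim := Complex.isPrimitiveRoot_exp k (by omega)
    rw [hexp] at hprim
    exact hprim.ne_one (by omega)
  set f : ℂ → ℝ := fun z => (1 + Real.cos θ) * z.re + Real.sin θ * z.im with hf
  have hpyth : Real.sin θ ^ 2 + Real.cos θ ^ 2 = 1 := Real.sin_sq_add_cos_sq θ
  -- total
  have htot : ∑ i, f (a i) = n * (1 + Real.cos θ) := by
    have hre : (∑ i, a i).re = ∑ i, (a i).re := Complex.re_sum _ _
    have him : (∑ i, a i).im = ∑ i, (a i).im := Complex.im_sum _ _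
    have : ∑ i, f (a i) = (1 + Real.cos θ) * (∑ i, a i).re
        + Real.sin θ * (∑ i, a i).im := by
      rw [hre, him, Finset.mul_sum, Finset.mul_sum, ← Finset.sum_add_distrib]
    rw [this, hsum, hexp]
    simp only [Complex.add_re, Complex.add_im, Complex.sub_re, Complex.sub_im,
      Complex.natCast_re, Complex.natCast_im, Complex.one_re, Complex.one_im, ← hζ,
      hζre, hζim]
    nlinarith
  -- each term is at most 1 + cos θ
  have hle : ∀ i, f (a i) ≤ 1 + Real.cos θ := by
    intro i
    by_cases h1 : a i = 1
    · simp [hf, h1]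
    by_cases h2 : a i = ζ
    · rw [hf]; simp only [h2, hζre, hζim]; nlinarith
    · exact (aux_lt k hk (a i) (ha i) h1 h2).le
  -- hence each a i is 1 or ζ
  have hall : ∀ i, a i = 1 ∨ a i = ζ := by
    intro i
    by_contra hcon
    push_neg at hcon
    have hstrict : f (a i) < 1 + Real.cos θ := aux_lt k hk (a i) (ha i) hcon.1 hcon.2
    have : ∑ j, f (a j) < ∑ _j : Fin n, (1 + Real.cos θ) := by
      apply Finset.sum_lt_sum (fun j _ => hle j) ⟨i, Finset.mem_univ i, hstrict⟩
    rw [htot, Finset.sum_const, Finset.card_univ, Fintype.card_fin, nsmul_eq_mul] at this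
    linarith
  -- counting
  set T : Finset (Fin n) := Finset.univ.filter (fun i => a i = ζ) with hT
  have hsplit : ∑ i, a i = (T.card : ℂ) * ζ + ((n : ℂ) - T.card) := by
    rw [← Finset.sum_filter_add_sum_filter_not Finset.univ (fun i => a i = ζ)]
    have h1 : ∑ i ∈ Finset.univ.filter (fun i => a i = ζ), a i = (T.card : ℂ) * ζ := by
      rw [Finset.sum_congr rfl (fun i hi => (Finset.mem_filter.mp hi).2),
        Finset.sum_const, nsmul_eq_mul, hT]
    have h2 : ∑ i ∈ Finset.univ.filter (fun i => ¬ a i = ζ), a i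
        = ((Finset.univ.filter (fun i => ¬ a i = ζ)).card : ℂ) := by
      rw [Finset.sum_congr rfl (fun i hi => ?_), Finset.sum_const, nsmul_eq_mul, mul_one]
      rcases hall i with h | h
      · exact h
      · exact absurd h (Finset.mem_filter.mp hi).2
    rw [h1, h2]
    have hcards : T.card + (Finset.univ.filter (fun i => ¬ a i = ζ)).card = n := by
      rw [hT, Finset.card_filter_add_card_filter_not, Finset.card_univ,
        Fintype.card_fin]
    have : ((Finset.univ.filter (fun i => ¬ a i = ζ)).card : ℂ) = (n : ℂ) - T.card := by
      have := congrArg (fun m : ℕ => (m : ℂ)) hcards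
      push_cast at this
      linear_combination this
    rw [this]
  have hcard1 : T.card = 1 := by
    have heq : (T.card : ℂ) * ζ + ((n : ℂ) - T.card) = (n : ℂ) - 1 + ζ := by
      rw [← hsplit, hsum, hexp, hζ]
    have : ((T.card : ℂ) - 1) * (ζ - 1) = 0 := by linear_combination heq
    rcases mul_eq_zero.mp this with h | h
    · have : (T.card : ℂ) = 1 := by linear_combination h
      exact_mod_cast this
    · exact absurd (by linear_combination h) hζ1
  obtain ⟨j, hj⟩ := Finset.card_eq_one.mp hcard1
  have hjζ : a j = ζ := by
    have : j ∈ T := hj ▸ Finset.mem_singleton_self j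
    exact (Finset.mem_filter.mp this).2
  refine ⟨j, ⟨hjζ.trans hexp.symm, ?_⟩, ?_⟩
  · intro i hij
    rcases hall i with h | h
    · exact h
    · have : i ∈ T := Finset.mem_filter.mpr ⟨Finset.mem_univ i, h⟩
      rw [hj, Finset.mem_singleton] at this
      exact absurd this hij
  · rintro j' ⟨hj'ζ, -⟩
    have : j' ∈ T := Finset.mem_filter.mpr ⟨Finset.mem_univ j', hj'ζ.trans hexp⟩
    rw [hj, Finset.mem_singleton] at this
    exact this
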